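/- Let k₃, k₂, k₁, k₀ ∈ ℝ, let u : ℝ → ℝ and t₀ ∈ ℝ with u(t₀) ≠ 0. Suppose u has derivative (k₃t₀³ − k₂t₀² + k₁t₀ − k₀)·u(t₀)³ − (3k₃t₀² − 2k₂t₀ + k₁ + 1)·u(t₀)² + (3k₃t₀ − k₂)·u(t₀) − k₃ at t₀ (the first-kind form AIL_FirstKind). Define y(t) = 1/u(t) − t. Then y(t₀) + t₀ ≠ 0 and y has derivative (k₃·y(t₀)³ + k₂·y(t₀)² + k₁·y(t₀) + k₀)/(y(t₀) + t₀) at t₀. Thus the change of variables {x = t, y = 1/u − t} carries the first-kind representative AIL_FirstKind into the second-kind canonical AIL representative y' = (k₃y³ + k₂y² + k₁y + k₀)/(y + x). -/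

import Mathlib

/-- The change of variables `{x = t, y = 1/u − t}` carries the first-kind representative
`u' = (k₃x³ − k₂x² + k₁x − k₀)u³ − (3k₃x² − 2k₂x + k₁ + 1)u² + (3k₃x − k₂)u − k₃`
into the second-kind canonical AIL representative
`y' = (k₃y³ + k₂y² + k₁y + k₀)/(y + x)`. -/
theorem AIL_firstKind_to_secondKind
    (k₃ k₂ k₁ k₀ : ℝ) (u : ℝ → ℝ) (t₀ : ℝ) (hu0 : u t₀ ≠ 0)
    (hu : HasDerivAt u
      ((k₃ * t₀ ^ 3 - k₂ * t₀ ^ 2 + k₁ * t₀ - k₀) * (u t₀) ^ 3 -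
        (3 * k₃ * t₀ ^ 2 - 2 * k₂ * t₀ + k₁ + 1) * (u t₀) ^ 2 +
        (3 * k₃ * t₀ - k₂) * (u t₀) - k₃) t₀)
    (y : ℝ → ℝ) (hy : y = fun t => 1 / u t - t) :
    y t₀ + t₀ ≠ 0 ∧
      HasDerivAt y
        ((k₃ * (y t₀) ^ 3 + k₂ * (y t₀) ^ 2 + k₁ * (y t₀) + k₀) / (y t₀ + t₀)) t₀ := by
  subst hy
  simp only
  have hne : (1 / u t₀ - t₀) + t₀ ≠ 0 := by
    have : (1 / u t₀ - t₀) + t₀ = 1 / u t₀ := by ring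
    rw [this]; exact one_div_ne_zero hu0
  refine ⟨hne, ?_⟩
  have h1 : HasDerivAt (fun t => 1 / u t - t)
      (-((k₃ * t₀ ^ 3 - k₂ * t₀ ^ 2 + k₁ * t₀ - k₀) * (u t₀) ^ 3 -
        (3 * k₃ * t₀ ^ 2 - 2 * k₂ * t₀ + k₁ + 1) * (u t₀) ^ 2 +
        (3 * k₃ * t₀ - k₂) * (u t₀) - k₃) / (u t₀) ^ 2 - 1) t₀ := by
    simpa [one_div, Pi.inv_def, Pi.sub_def] using (hu.inv hu0).sub (hasDerivAt_id t₀)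
  convert h1 using 1
  have hs : 1 / u t₀ - t₀ + t₀ = 1 / u t₀ := by ring
  rw [hs]
  field_simp
  ring
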